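/- In a complete chain graph G, for any block B (a connected component of the undirected-edge subgraph), the set of parents pa_G(B) of B is a union of blocks of G; that is, if A ∈ pa_G(B) and W lies in the same block as A with W ≠ A, then W ∈ pa_G(B). -/

import Mathlib

/-- A mixed graph with directed and undirected edges, at most one edge between any
two vertices, and no partially directed cycle (a chain graph). -/
structure ChainGraph (V : Type*) where
  /-- directed edge `a → b` -/
  Dir : V → V → Prop
  /-- undirected edge `a − b` -/
  Undir : V → V → Prop
  undir_symm : ∀ a b, Undir a b → Undir b a
  undir_irrefl : ∀ a, ¬ Undir a a
  dir_irrefl : ∀ a, ¬ Dir a a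
  not_dir_and_undir : ∀ a b, Dir a b → ¬ Undir a b
  not_dir_both : ∀ a b, Dir a b → ¬ Dir b a
  /-- no partially directed cycle: there is no partially directed path from `a` to `b`
  together with a directed edge `b → a`. -/
  no_partially_directed_cycle :
    ∀ a b, Relation.ReflTransGen (fun x y => Dir x y ∨ Undir x y) a b → ¬ Dir b a

namespace ChainGraph

variable {V : Type*} (G : ChainGraph V)

/-- Every pair of distinct vertices is adjacent. -/
def Complete : Prop := ∀ a b : V, a ≠ b → G.Dir a b ∨ G.Dir b a ∨ G.Undir a b

/-- `a` and `b` are connected by a path of undirected edges (or equal). -/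
def SameBlock (a b : V) : Prop := Relation.ReflTransGen G.Undir a b

/-- A block: a connected component of the undirected-edge subgraph. -/
def IsBlock (B : Set V) : Prop := ∃ v, B = {w | G.SameBlock v w}

/-- The parents of the vertex set `B` lying outside of `B`. -/
def parentsOf (B : Set V) : Set V := {w | w ∉ B ∧ ∃ v ∈ B, G.Dir w v}

/-- A set of vertices is valid (a union of blocks) if it is closed under `SameBlock`. -/
def Valid (A : Set V) : Prop := ∀ a ∈ A, ∀ w, G.SameBlock a w → w ∈ A

/-- `a` is in the anterior of `b`: there is a partially directed path from `a` to `b`,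
or `a = b`. -/
def Anterior (a b : V) : Prop :=
  Relation.ReflTransGen (fun x y => G.Dir x y ∨ G.Undir x y) a b

end ChainGraph

/-- In a complete chain graph, for any block `B`, the set of parents of `B`
is a union of blocks: if `a ∈ pa_G(B)` and `w` lies in the same block as `a` with
`w ≠ a`, then `w ∈ pa_G(B)`. -/
theorem parents_of_block_union_of_blocks {V : Type*} (G : ChainGraph V)
    (hc : G.Complete) (B : Set V) (hB : G.IsBlock B)
    (a : V) (ha : a ∈ G.parentsOf B) (w : V) (hw : G.SameBlock a w) (hwa : w ≠ a) :
    w ∈ G.parentsOf B := by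
  obtain ⟨v₀, rfl⟩ := hB
  obtain ⟨haB, v, hvB, hav⟩ := ha
  have symmBlock : Symmetric (G.SameBlock) :=
    haveI : Std.Symm G.Undir := ⟨fun x y h => G.undir_symm x y h⟩
    fun x y h => (Relation.ReflTransGen.symmetric (r := G.Undir)).symm x y h
  -- w ∉ B
  have hwB : w ∉ {w | G.SameBlock v₀ w} := by
    intro hwmem
    exact haB (hwmem.trans (symmBlock hw))
  refine ⟨hwB, v, hvB, ?_⟩
  have hwv : w ≠ v := fun h => hwB (h ▸ hvB)
  rcases hc w v hwv with h | h | h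
  · exact h
  · -- Dir v w contradicts no partially directed cycle: w ⇝ a → v, Dir v w
    exfalso
    have hwa' : G.Anterior w a :=
      Relation.ReflTransGen.mono (fun x y h => Or.inr h) w a (symmBlock hw)
    exact G.no_partially_directed_cycle w v (hwa'.tail (Or.inl hav)) h
  · -- Undir w v would put w in B
    exact absurd (hvB.tail (G.undir_symm w v h)) hwB
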